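/- Fix an integer s ≥ 2. Let X_1, X_2, … be an i.i.d. sequence of random variables with the Log-Logistic(α;0,1) distribution, α > 0, and for each i ∈ ℕ let Q_{i,s}^{LL*} = (1/2)·log(X_{(is, i(s+1)−1)}/X_{(i, i(s+1)−1)})/log(s) be computed from the first n = i(s+1)−1 observations. Then Q_{i,s}^{LL*} converges almost surely to 1/α as i → ∞. -/

import Mathlib

open MeasureTheory ProbabilityTheory Real Filter

/-- The `k`-th order statistic (1-based indexing) of the sample `x : Fin n → ℝ`. -/
noncomputable def orderStat (n : ℕ) (x : Fin n → ℝ) (k : ℕ) : ℝ :=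
  (Multiset.sort ((List.ofFn x : List ℝ) : Multiset ℝ) (· ≤ ·)).getD (k - 1) 0

/-- The cumulative distribution function of the Log-Logistic(α; 0, 1) distribution. -/
noncomputable def logLogisticCDF (α : ℝ) (x : ℝ) : ℝ :=
  if 0 < x then 1 / (1 + x ^ (-α)) else 0

lemma sorted_getD_le_iff {l : List ℝ} (hl : l.Pairwise (· ≤ ·)) {j : ℕ} (hj : j < l.length)
    (t : ℝ) : l.getD j 0 ≤ t ↔ j < l.countP (fun a => a ≤ t) := by
  rw [List.getD_eq_getElem l 0 hj]
  constructor
  · intro h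
    have h1 : (l.take (j+1)).countP (fun a => a ≤ t) = (l.take (j+1)).length := by
      rw [List.countP_eq_length]
      intro a ha
      obtain ⟨i, hi, rfl⟩ := List.mem_iff_getElem.1 ha
      have hi' : i < l.length := lt_of_lt_of_le hi (by simp [List.length_take])
      rw [List.getElem_take]
      have hij : i ≤ j := by
        have := hi; simp [List.length_take] at this; omega
      rcases eq_or_lt_of_le hij with rfl | hlt
      · simpa using h
      · have := hl.rel_get_of_lt (a := ⟨i, hi'⟩) (b := ⟨j, hj⟩) hlt
        simp only [List.get_eq_getElem] at this
        simpa using le_trans this h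
    have h2 : (l.take (j+1)).countP (fun a => a ≤ t) ≤ l.countP (fun a => a ≤ t) :=
      (List.take_sublist _ _).countP_le
    have h3 : (l.take (j+1)).length = j + 1 := by simp [List.length_take]; omega
    omega
  · intro h
    by_contra hc
    push_neg at hc
    have hdrop : (l.drop j).countP (fun a => a ≤ t) = 0 := by
      rw [List.countP_eq_zero]
      intro a ha
      obtain ⟨i, hi, rfl⟩ := List.mem_iff_getElem.1 ha
      rw [List.getElem_drop]
      have hji : j ≤ j + i := Nat.le_add_right _ _
      have hi' : j + i < l.length := by simp [List.length_drop] at hi; omega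
      have : l[j] ≤ l[j+i] := by
        rcases Nat.eq_or_lt_of_le hji with he | hlt
        · simp [← he]
        · have := hl.rel_get_of_lt (a := ⟨j, hj⟩) (b := ⟨j+i, hi'⟩) hlt
          simpa using this
      simp only [decide_eq_true_eq]
      intro hle
      exact absurd (le_trans this hle) (not_le.2 hc)
    have := List.take_append_drop j l
    have hsplit : l.countP (fun a => a ≤ t)
        = (l.take j).countP (fun a => a ≤ t) + (l.drop j).countP (fun a => a ≤ t) := by
      conv_lhs => rw [← this]
      rw [List.countP_append]
    have h4 : (l.take j).countP (fun a => a ≤ t) ≤ j := by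
      calc (l.take j).countP (fun a => a ≤ t) ≤ (l.take j).length := List.countP_le_length
        _ ≤ j := by simp [List.length_take]
    omega

lemma orderStat_le_iff {n k : ℕ} (x : Fin n → ℝ) (t : ℝ) (hk1 : 1 ≤ k) (hkn : k ≤ n) :
    orderStat n x k ≤ t ↔ k ≤ (Finset.univ.filter fun j => x j ≤ t).card := by
  unfold orderStat
  set l := Multiset.sort ((List.ofFn x : List ℝ) : Multiset ℝ) (· ≤ ·) with hldef
  have hl : l.Pairwise (· ≤ ·) := Multiset.pairwise_sort _ _
  have hlen : l.length = n := by
    simp [hldef]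
  have hcount : l.countP (fun a => a ≤ t) = (Finset.univ.filter fun j => x j ≤ t).card := by
    have h1 : (l : Multiset ℝ) = ((List.ofFn x : List ℝ) : Multiset ℝ) :=
      Multiset.sort_eq _ _
    have h2 : l.countP (fun a => a ≤ t) = (List.ofFn x).countP (fun a => a ≤ t) := by
      have := congrArg (Multiset.countP (fun a => a ≤ t)) h1
      simpa using this
    rw [h2]
    rw [List.ofFn_eq_map, List.countP_map]
    simp [Finset.filter, Fin.univ_def, Multiset.filter_coe, List.countP_eq_length_filter,
      Function.comp]
    rfl
  rw [sorted_getD_le_iff hl (by omega) t]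
  omega


lemma logLogisticCDF_nonneg (α x : ℝ) : 0 ≤ logLogisticCDF α x := by
  unfold logLogisticCDF
  split_ifs with h
  · positivity
  · exact le_refl 0

lemma slln_count {Ω : Type*} [MeasurableSpace Ω] (μ : Measure Ω) [IsProbabilityMeasure μ]
    (α : ℝ) (X : ℕ → Ω → ℝ) (hmeas : ∀ k, Measurable (X k))
    (hindep : iIndepFun X μ)
    (hdist : ∀ k x, μ {ω | X k ω ≤ x} = ENNReal.ofReal (logLogisticCDF α x))
    (t : ℝ) :
    ∀ᵐ ω ∂μ, Tendsto (fun n : ℕ =>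
      ((Finset.univ.filter fun j : Fin n => X j ω ≤ t).card : ℝ) / n)
      atTop (nhds (logLogisticCDF α t)) := by
  set φ : ℝ → ℝ := fun y => if y ≤ t then 1 else 0 with hφdef
  have hφ : Measurable φ := Measurable.ite measurableSet_Iic measurable_const measurable_const
  set Y : ℕ → Ω → ℝ := fun j ω => φ (X j ω) with hYdef
  have hYmeas : ∀ j, Measurable (Y j) := fun j => hφ.comp (hmeas j)
  have hSmeas : ∀ j, MeasurableSet {ω | X j ω ≤ t} := fun j =>
    (hmeas j) measurableSet_Iic
  have hYind : ∀ j, Y j = Set.indicator {ω | X j ω ≤ t} (fun _ => (1:ℝ)) := by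
    intro j
    ext ω
    simp [hYdef, hφdef, Set.indicator_apply]
  have hint : Integrable (Y 0) μ := by
    rw [hYind 0]
    exact (integrable_indicator_iff (hSmeas 0)).2
      (integrableOn_const (measure_ne_top μ _) (by simp))
  have hpind : Pairwise (Function.onFun (IndepFun · · μ) Y) := by
    intro i j hij
    exact (hindep.indepFun hij).comp hφ hφ
  have hidX : ∀ i, IdentDistrib (X i) (X 0) μ μ := by
    intro i
    refine ⟨(hmeas i).aemeasurable, (hmeas 0).aemeasurable, ?_⟩
    have : ∀ k, IsProbabilityMeasure (μ.map (X k)) := fun k =>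
      Measure.isProbabilityMeasure_map (hmeas k).aemeasurable
    refine MeasureTheory.Measure.ext_of_Iic _ _ (fun a => ?_)
    rw [Measure.map_apply (hmeas i) measurableSet_Iic,
      Measure.map_apply (hmeas 0) measurableSet_Iic]
    have h1 : X i ⁻¹' Set.Iic a = {ω | X i ω ≤ a} := rfl
    have h2 : X 0 ⁻¹' Set.Iic a = {ω | X 0 ω ≤ a} := rfl
    rw [h1, h2, hdist i a, hdist 0 a]
  have hident : ∀ i, IdentDistrib (Y i) (Y 0) μ μ := fun i => (hidX i).comp hφ
  have hEY : μ[Y 0] = logLogisticCDF α t := by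
    rw [hYind 0]
    rw [integral_indicator_const (1:ℝ) (hSmeas 0), Measure.real, hdist 0 t]
    simp [ENNReal.toReal_ofReal (logLogisticCDF_nonneg α t)]
  filter_upwards [strong_law_ae_real Y hint hpind hident] with ω hω
  rw [hEY] at hω
  refine hω.congr (fun n => ?_)
  congr 1
  rw [Finset.card_filter]
  push_cast
  rw [← Fin.sum_univ_eq_sum_range (fun j => Y j ω) n]

lemma logLogisticCDF_strictMono (α : ℝ) (hα : 0 < α) {x y : ℝ} (hx : 0 < x) (hxy : x < y) :
    logLogisticCDF α x < logLogisticCDF α y := by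
  have hy : 0 < y := hx.trans hxy
  unfold logLogisticCDF
  rw [if_pos hx, if_pos hy]
  have hxp : 0 < x ^ (-α) := Real.rpow_pos_of_pos hx _
  have hyp : 0 < y ^ (-α) := Real.rpow_pos_of_pos hy _
  have key : y ^ (-α) < x ^ (-α) := by
    rw [Real.rpow_neg hx.le, Real.rpow_neg hy.le]
    have h1 : x ^ α < y ^ α := Real.rpow_lt_rpow hx.le hxy hα
    have h2 : 0 < x ^ α := Real.rpow_pos_of_pos hx _
    exact inv_strictAnti₀ h2 h1
  have d1 : 0 < 1 + x ^ (-α) := by linarith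
  have d2 : 0 < 1 + y ^ (-α) := by linarith
  rw [div_lt_div_iff₀ d1 d2]
  linarith

lemma ratio_tendsto (s c : ℕ) (hs : 2 ≤ s) :
    Tendsto (fun i : ℕ => ((i * c : ℕ) : ℝ) / ((i * (s + 1) - 1 : ℕ) : ℝ)) atTop
      (nhds ((c : ℝ) / (s + 1))) := by
  have hd : Tendsto (fun i : ℕ => ((s:ℝ) + 1) - 1 / (i : ℝ)) atTop (nhds (((s:ℝ) + 1) - 0)) :=
    tendsto_const_nhds.sub (tendsto_one_div_atTop_nhds_zero_nat)
  rw [sub_zero] at hd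
  have hne : ((s:ℝ) + 1) ≠ 0 := by positivity
  have h2 : Tendsto (fun i : ℕ => (c : ℝ) / (((s:ℝ) + 1) - 1 / (i : ℝ))) atTop
      (nhds ((c : ℝ) / (s + 1))) := tendsto_const_nhds.div hd hne
  refine h2.congr' ?_
  filter_upwards [eventually_ge_atTop 1] with i hi
  have hi0 : (0:ℝ) < (i : ℝ) := by exact_mod_cast hi
  have hcast : ((i * (s + 1) - 1 : ℕ) : ℝ) = (i : ℝ) * ((s:ℝ) + 1) - 1 := by
    have h1 : 1 ≤ i * (s + 1) := by
      have := Nat.mul_le_mul hi (Nat.le_refl (s+1)); omega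
    push_cast [Nat.cast_sub h1]
    ring
  have hden : (i : ℝ) * ((s:ℝ) + 1) - 1 ≠ 0 := by
    have hs1 : (3:ℝ) ≤ (s:ℝ) + 1 := by
      have : (2:ℝ) ≤ (s:ℝ) := by exact_mod_cast hs
      linarith
    have : (3:ℝ) ≤ (i:ℝ) * ((s:ℝ)+1) := by
      have hi1 : (1:ℝ) ≤ (i:ℝ) := by exact_mod_cast hi
      nlinarith
    linarith
  have hden2 : ((s:ℝ) + 1) - 1 / (i : ℝ) ≠ 0 := by
    have h1i : 1 / (i:ℝ) ≤ 1 := by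
      rw [div_le_one hi0]; exact_mod_cast hi
    have hs1 : (3:ℝ) ≤ (s:ℝ) + 1 := by
      have : (2:ℝ) ≤ (s:ℝ) := by exact_mod_cast hs
      linarith
    intro h; rw [sub_eq_zero] at h; linarith
  rw [hcast]
  push_cast
  rw [div_eq_div_iff hden2 hden]
  have hinv : (i:ℝ) * (1/(i:ℝ)) = 1 := by field_simp
  nlinarith [hinv]

lemma orderStat_tendsto {Ω : Type*} [MeasurableSpace Ω] (μ : Measure Ω) [IsProbabilityMeasure μ]
    (s : ℕ) (hs : 2 ≤ s) (α : ℝ) (hα : 0 < α)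
    (X : ℕ → Ω → ℝ) (hmeas : ∀ k, Measurable (X k))
    (hindep : iIndepFun X μ)
    (hdist : ∀ k x, μ {ω | X k ω ≤ x} = ENNReal.ofReal (logLogisticCDF α x))
    (c : ℕ) (hc1 : 1 ≤ c) (hcs : c ≤ s) (q : ℝ) (hq : 0 < q)
    (hFq : logLogisticCDF α q = (c : ℝ) / (s + 1)) :
    ∀ᵐ ω ∂μ, Tendsto (fun i : ℕ =>
      orderStat (i * (s + 1) - 1) (fun j => X j ω) (i * c)) atTop (nhds q) := by
  set p : ℝ := (c : ℝ) / (s + 1) with hpdef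
  -- the subsequence n i tends to infinity
  have hn : Tendsto (fun i : ℕ => i * (s + 1) - 1) atTop atTop := by
    refine tendsto_atTop_mono (fun i => ?_) tendsto_id
    simp only [id]
    have h3 : i * 3 ≤ i * (s + 1) := Nat.mul_le_mul_left i (by omega)
    omega
  -- the countable families of test points
  set tp : ℕ → ℝ := fun m => q + 1 / (m + 1) with htp
  set tm : ℕ → ℝ := fun m => q - q / (m + 2) with htm
  have htm_pos : ∀ m : ℕ, 0 < tm m := by
    intro m
    have h1 : q / ((m:ℝ) + 2) < q := by
      rw [div_lt_iff₀ (by positivity)]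
      nlinarith
    simp only [htm]; linarith
  have htm_lt : ∀ m : ℕ, tm m < q := by
    intro m
    have : 0 < q / ((m:ℝ) + 2) := by positivity
    simp only [htm]; linarith
  have htp_gt : ∀ m : ℕ, q < tp m := by
    intro m
    have : 0 < 1 / ((m:ℝ) + 1) := by positivity
    simp only [htp]; linarith
  have htm_tendsto : Tendsto tm atTop (nhds q) := by
    have h1 : Tendsto (fun m : ℕ => ((m:ℝ) + 2)) atTop atTop :=
      tendsto_atTop_add_const_right atTop 2 tendsto_natCast_atTop_atTop
    have h2 : Tendsto (fun m : ℕ => q / ((m:ℝ) + 2)) atTop (nhds 0) := by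
      simpa [div_eq_mul_inv] using (h1.inv_tendsto_atTop).const_mul q
    have := tendsto_const_nhds.sub h2 (f := fun _ : ℕ => q)
    simpa using this
  have hratio := ratio_tendsto s c hs
  filter_upwards [ae_all_iff.2 (fun m => slln_count μ α X hmeas hindep hdist (tp m)),
    ae_all_iff.2 (fun m => slln_count μ α X hmeas hindep hdist (tm m))] with ω hplus hminus
  rw [tendsto_order]
  constructor
  · -- lower bound: ∀ a < q, eventually a < orderStat
    intro a ha
    obtain ⟨m, hm⟩ : ∃ m : ℕ, a < tm m := (htm_tendsto.eventually_const_lt ha).exists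
    have hFlt : logLogisticCDF α (tm m) < p := by
      rw [← hFq]
      exact logLogisticCDF_strictMono α hα (htm_pos m) (htm_lt m)
    set r : ℝ := (logLogisticCDF α (tm m) + p) / 2 with hr
    have hr1 : logLogisticCDF α (tm m) < r := by rw [hr]; linarith
    have hr2 : r < p := by rw [hr]; linarith
    have hC := (hminus m).comp hn
    have hCev : ∀ᶠ i : ℕ in atTop,
        ((Finset.univ.filter fun j : Fin (i * (s+1) - 1) => X j ω ≤ tm m).card : ℝ)
          / ((i * (s+1) - 1 : ℕ) : ℝ) < r := hC.eventually_lt_const hr1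
    have hkev : ∀ᶠ i : ℕ in atTop, r < ((i * c : ℕ) : ℝ) / ((i * (s+1) - 1 : ℕ) : ℝ) :=
      hratio.eventually_const_lt hr2
    filter_upwards [hCev, hkev, eventually_ge_atTop 1] with i hCi hki hi1
    have hnpos : 0 < i * (s + 1) - 1 := by
      have h3 : 1 * 3 ≤ i * (s + 1) := Nat.mul_le_mul hi1 (by omega)
      omega
    have hnposR : (0:ℝ) < ((i * (s+1) - 1 : ℕ) : ℝ) := by exact_mod_cast hnpos
    have hlt : ((Finset.univ.filter fun j : Fin (i * (s+1) - 1) => X j ω ≤ tm m).card : ℝ)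
        < ((i * c : ℕ) : ℝ) := by
      have := lt_trans hCi hki
      rwa [div_lt_div_iff_of_pos_right hnposR] at this
    have hltn : (Finset.univ.filter fun j : Fin (i * (s+1) - 1) => X j ω ≤ tm m).card < i * c := by
      exact_mod_cast hlt
    have hk1 : 1 ≤ i * c := Nat.one_le_iff_ne_zero.2 (by positivity)
    have hkn : i * c ≤ i * (s + 1) - 1 := by
      have h1 : i * c ≤ i * s := Nat.mul_le_mul_left i hcs
      have h2 : i * (s + 1) = i * s + i := by ring
      omega
    have : ¬ orderStat (i * (s+1) - 1) (fun j => X j ω) (i * c) ≤ tm m := by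
      rw [orderStat_le_iff _ _ hk1 hkn]
      omega
    push_neg at this
    exact lt_trans hm this
  · -- upper bound: ∀ b > q, eventually orderStat < b
    intro b hb
    obtain ⟨m, hm⟩ : ∃ m : ℕ, 1 / ((m:ℝ) + 1) < b - q := exists_nat_one_div_lt (by linarith)
    have htpb : tp m < b := by simp only [htp]; linarith
    have hFgt : p < logLogisticCDF α (tp m) := by
      rw [← hFq]
      exact logLogisticCDF_strictMono α hα hq (htp_gt m)
    set r : ℝ := (p + logLogisticCDF α (tp m)) / 2 with hr
    have hr1 : p < r := by rw [hr]; linarith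
    have hr2 : r < logLogisticCDF α (tp m) := by rw [hr]; linarith
    have hC := (hplus m).comp hn
    have hCev : ∀ᶠ i : ℕ in atTop,
        r < ((Finset.univ.filter fun j : Fin (i * (s+1) - 1) => X j ω ≤ tp m).card : ℝ)
          / ((i * (s+1) - 1 : ℕ) : ℝ) := hC.eventually_const_lt hr2
    have hkev : ∀ᶠ i : ℕ in atTop, ((i * c : ℕ) : ℝ) / ((i * (s+1) - 1 : ℕ) : ℝ) < r :=
      hratio.eventually_lt_const hr1
    filter_upwards [hCev, hkev, eventually_ge_atTop 1] with i hCi hki hi1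
    have hnpos : 0 < i * (s + 1) - 1 := by
      have h3 : 1 * 3 ≤ i * (s + 1) := Nat.mul_le_mul hi1 (by omega)
      omega
    have hnposR : (0:ℝ) < ((i * (s+1) - 1 : ℕ) : ℝ) := by exact_mod_cast hnpos
    have hlt : ((i * c : ℕ) : ℝ)
        < ((Finset.univ.filter fun j : Fin (i * (s+1) - 1) => X j ω ≤ tp m).card : ℝ) := by
      have := lt_trans hki hCi
      rwa [div_lt_div_iff_of_pos_right hnposR] at this
    have hltn : i * c ≤ (Finset.univ.filter fun j : Fin (i * (s+1) - 1) => X j ω ≤ tp m).card := by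
      have : i * c < (Finset.univ.filter fun j : Fin (i * (s+1) - 1) => X j ω ≤ tp m).card := by
        exact_mod_cast hlt
      omega
    have hk1 : 1 ≤ i * c := Nat.one_le_iff_ne_zero.2 (by positivity)
    have hkn : i * c ≤ i * (s + 1) - 1 := by
      have h1 : i * c ≤ i * s := Nat.mul_le_mul_left i hcs
      have h2 : i * (s + 1) = i * s + i := by ring
      omega
    have hle : orderStat (i * (s+1) - 1) (fun j => X j ω) (i * c) ≤ tp m :=
      (orderStat_le_iff _ _ hk1 hkn).2 hltn
    exact lt_of_le_of_lt hle htpb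

lemma logLogisticCDF_rpow (α : ℝ) (hα : 0 < α) (s : ℕ) (hs : 2 ≤ s) (e : ℝ) :
    logLogisticCDF α ((s : ℝ) ^ (e / α)) = 1 / (1 + (s:ℝ) ^ (-e)) := by
  have hs0 : (0:ℝ) < s := by
    have : (2:ℝ) ≤ (s:ℝ) := by exact_mod_cast hs
    linarith
  have hq : (0:ℝ) < (s : ℝ) ^ (e / α) := Real.rpow_pos_of_pos hs0 _
  unfold logLogisticCDF
  rw [if_pos hq]
  congr 2
  rw [← Real.rpow_mul hs0.le]
  congr 1
  field_simp

/-- For fixed `s ≥ 2` and an i.i.d. sequence from the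
Log-Logistic(α;0,1) distribution, the estimators
`Q_{i,s}^{LL*} = (1/2) log(X_{(is,n)}/X_{(i,n)}) / log s`,
computed from the first `n = i(s+1)-1` observations, converge almost surely
to `1/α` as `i → ∞`. -/
theorem stmt3 {Ω : Type*} [MeasurableSpace Ω] (μ : Measure Ω) [IsProbabilityMeasure μ]
    (s : ℕ) (hs : 2 ≤ s) (α : ℝ) (hα : 0 < α)
    (X : ℕ → Ω → ℝ) (hmeas : ∀ k, Measurable (X k))
    (hindep : iIndepFun X μ)
    (hdist : ∀ k x, μ {ω | X k ω ≤ x} = ENNReal.ofReal (logLogisticCDF α x)) :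
    ∀ᵐ ω ∂μ, Tendsto (fun i : ℕ =>
        (1 / 2) * Real.log
          (orderStat (i * (s + 1) - 1) (fun j => X j ω) (i * s) /
            orderStat (i * (s + 1) - 1) (fun j => X j ω) i) / Real.log s)
      atTop (nhds (1 / α)) := by
  have hs0 : (0:ℝ) < s := by
    have : (2:ℝ) ≤ (s:ℝ) := by exact_mod_cast hs
    linarith
  have hs1 : (1:ℝ) < s := by
    have : (2:ℝ) ≤ (s:ℝ) := by exact_mod_cast hs
    linarith
  set q2 : ℝ := (s : ℝ) ^ ((1:ℝ) / α) with hq2def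
  set q1 : ℝ := (s : ℝ) ^ ((-1:ℝ) / α) with hq1def
  have hq2 : 0 < q2 := Real.rpow_pos_of_pos hs0 _
  have hq1 : 0 < q1 := Real.rpow_pos_of_pos hs0 _
  have hF2 : logLogisticCDF α q2 = (s : ℝ) / (s + 1) := by
    rw [hq2def, logLogisticCDF_rpow α hα s hs 1, Real.rpow_neg_one]
    field_simp
  have hF1 : logLogisticCDF α q1 = (1 : ℝ) / (s + 1) := by
    rw [hq1def, logLogisticCDF_rpow α hα s hs (-1), neg_neg, Real.rpow_one]
    field_simp
    ring
  have T2 := orderStat_tendsto μ s hs α hα X hmeas hindep hdist s (by omega) le_rfl q2 hq2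
    (by rw [hF2])
  have T1 := orderStat_tendsto μ s hs α hα X hmeas hindep hdist 1 le_rfl (by omega) q1 hq1
    (by rw [hF1]; norm_num)
  filter_upwards [T2, T1] with ω h2 h1
  simp only [mul_one] at h1
  have hpos2 : ∀ᶠ i : ℕ in atTop,
      0 < orderStat (i * (s + 1) - 1) (fun j => X j ω) (i * s) := h2.eventually_const_lt hq2
  have hpos1 : ∀ᶠ i : ℕ in atTop,
      0 < orderStat (i * (s + 1) - 1) (fun j => X j ω) i := h1.eventually_const_lt hq1
  have hlog2 : Tendsto (fun i : ℕ =>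
      Real.log (orderStat (i * (s + 1) - 1) (fun j => X j ω) (i * s))) atTop
      (nhds (Real.log q2)) := ((Real.continuousAt_log hq2.ne').tendsto.comp h2)
  have hlog1 : Tendsto (fun i : ℕ =>
      Real.log (orderStat (i * (s + 1) - 1) (fun j => X j ω) i)) atTop
      (nhds (Real.log q1)) := ((Real.continuousAt_log hq1.ne').tendsto.comp h1)
  have hmain : Tendsto (fun i : ℕ =>
      (1 / 2) * (Real.log (orderStat (i * (s + 1) - 1) (fun j => X j ω) (i * s))
        - Real.log (orderStat (i * (s + 1) - 1) (fun j => X j ω) i)) / Real.log s) atTop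
      (nhds ((1 / 2) * (Real.log q2 - Real.log q1) / Real.log s)) :=
    ((hlog2.sub hlog1).const_mul (1/2)).div_const (Real.log s)
  have hlogs : Real.log s ≠ 0 := ne_of_gt (Real.log_pos hs1)
  have hval : (1 / 2) * (Real.log q2 - Real.log q1) / Real.log s = 1 / α := by
    rw [hq2def, hq1def, Real.log_rpow hs0, Real.log_rpow hs0]
    field_simp
    ring
  rw [hval] at hmain
  refine hmain.congr' ?_
  filter_upwards [hpos2, hpos1] with i hp2 hp1
  rw [Real.log_div hp2.ne' hp1.ne']
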